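/- Let 1 ≤ p ≤ q < ∞ and let Λ, Γ be Waterman sequences. Then ΛBV^{(p)} ⊆ ΓBV^{(q)} if and only if sup_{n≥1} Γ(n)^{1/q} / Λ(n)^{1/p} < ∞. -/

import Mathlib

open Finset Filter

-- shift lemma
lemma rpow_shift_mono {r x y δ : ℝ} (hr : 1 ≤ r) (hx : 0 ≤ x) (hxy : x ≤ y) (hδ : 0 ≤ δ) :
    (x + δ) ^ r - x ^ r ≤ (y + δ) ^ r - y ^ r := by
  rcases eq_or_lt_of_le hxy with rfl | hlt
  · exact le_refl _
  rcases eq_or_lt_of_le hδ with rfl | hδ'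
  · simp
  have hy : (0:ℝ) ≤ y := hx.trans hxy
  have hcv := convexOn_rpow hr
  -- slope (x, x+δ) ≤ slope (x, y+δ) ≤ slope (y, y+δ)
  have h1 : ((x + δ) ^ r - x ^ r) / ((x + δ) - x) ≤ ((y + δ) ^ r - x ^ r) / ((y + δ) - x) := by
    have := hcv.secant_mono (a := x) (x := x + δ) (y := y + δ)
      (Set.mem_Ici.2 hx) (Set.mem_Ici.2 (by linarith)) (Set.mem_Ici.2 (by linarith))
      (by linarith) (by linarith) (by linarith)
    simpa using this
  have h2 : ((x) ^ r - (y+δ) ^ r) / (x - (y+δ)) ≤ ((y) ^ r - (y+δ) ^ r) / (y - (y+δ)) := by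
    have := hcv.secant_mono (a := y + δ) (x := x) (y := y)
      (Set.mem_Ici.2 (by linarith)) (Set.mem_Ici.2 hx) (Set.mem_Ici.2 hy)
      (by linarith) (by linarith) hxy
    simpa using this
  have e1 : ((x + δ) ^ r - x ^ r) / δ ≤ ((y + δ) ^ r - x ^ r) / ((y + δ) - x) := by
    simpa using h1
  have e2 : ((y + δ) ^ r - x ^ r) / ((y + δ) - x) ≤ ((y + δ) ^ r - y ^ r) / δ := by
    rw [show x - (y + δ) = -((y + δ) - x) by ring,
        show x ^ r - (y + δ) ^ r = -((y + δ) ^ r - x ^ r) by ring,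
        show y - (y + δ) = -δ by ring,
        show y ^ r - (y + δ) ^ r = -((y + δ) ^ r - y ^ r) by ring,
        neg_div_neg_eq, neg_div_neg_eq] at h2
    exact h2
  have := e1.trans e2
  rw [div_le_div_iff₀ hδ' hδ'] at this
  nlinarith [this]


-- Abel summation identity
lemma abel_id (c G : ℕ → ℝ) (n : ℕ) :
    ∑ j ∈ range n, c j * (G (j+1) - G j)
      = ∑ j ∈ range n, (c j - c (j+1)) * G (j+1) + c n * G n - c 0 * G 0 := by
  induction n with
  | zero => simp
  | succ m ih => rw [sum_range_succ, sum_range_succ, ih]; ring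

-- sum over arbitrary finset of naturals of an antitone function
lemma antitone_finset_sum_le (g : ℕ → ℝ) (hg : Antitone g) (hg0 : ∀ n, 0 ≤ g n) (A : Finset ℕ) :
    ∑ j ∈ A, g j ≤ ∑ j ∈ range A.card, g j := by
  classical
  induction A using Finset.strongInduction with
  | _ A ih =>
    rcases A.eq_empty_or_nonempty with rfl | hA
    · simp
    · have hmax := A.max'_mem hA
      have hsub : A ⊆ range (A.max' hA + 1) := by
        intro x hx
        exact mem_range.2 (Nat.lt_succ_of_le (A.le_max' x hx))
      have hcard : A.card ≤ A.max' hA + 1 := by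
        simpa using Finset.card_le_card hsub
      have hstep := ih (A.erase (A.max' hA)) (Finset.erase_ssubset hmax)
      have hcarde : (A.erase (A.max' hA)).card = A.card - 1 := by
        rw [Finset.card_erase_of_mem hmax]
      have hA1 : 1 ≤ A.card := Finset.card_pos.2 hA
      calc ∑ j ∈ A, g j = ∑ j ∈ A.erase (A.max' hA), g j + g (A.max' hA) := by
            rw [Finset.sum_erase_add _ _ hmax]
        _ ≤ ∑ j ∈ range (A.card - 1), g j + g (A.card - 1) := by
            refine add_le_add ?_ (hg (by omega))
            rw [← hcarde]; exact hstep
        _ = ∑ j ∈ range A.card, g j := by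
            rw [show A.card = (A.card - 1) + 1 by omega, sum_range_succ]
            simp

-- doubling
lemma sum_range_two_mul_le (g : ℕ → ℝ) (hg : Antitone g) (n : ℕ) :
    ∑ j ∈ range (2 * n), g j ≤ 2 * ∑ j ∈ range n, g j := by
  have : ∑ j ∈ range (2*n), g j = ∑ j ∈ range n, g j + ∑ j ∈ range n, g (n + j) := by
    rw [two_mul, Finset.sum_range_add]
  rw [this, two_mul]
  gcongr with j hj
  exact hg (Nat.le_add_left j n)

lemma geom_finset_le (K : Finset ℕ) : ∑ k ∈ K, ((1:ℝ)/2) ^ k ≤ 2 := by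
  have h := Summable.sum_le_tsum K (fun k _ => by positivity)
    (summable_geometric_of_lt_one (by norm_num) (by norm_num : (1:ℝ)/2 < 1))
  rwa [tsum_geometric_of_lt_one (by norm_num) (by norm_num), show ((1:ℝ)-1/2)⁻¹ = 2 by norm_num] at h


noncomputable def spikePos (N : ℕ → ℕ) (k i : ℕ) : ℝ := (1/2)^(k+1) * (1 + ((i:ℝ)+1)/((N k : ℝ)+1))
noncomputable def spikeMid (N : ℕ → ℕ) (k i : ℕ) : ℝ := (1/2)^(k+1) * (1 + ((i:ℝ)+1/2)/((N k : ℝ)+1))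
noncomputable def spikeH (lam : ℕ → ℝ) (p : ℝ) (N : ℕ → ℕ) (k : ℕ) : ℝ :=
  (1/2)^k / (∑ j ∈ range (N k), 1 / lam j) ^ (1/p)
open Classical in
noncomputable def spikeF (lam : ℕ → ℝ) (p : ℝ) (N : ℕ → ℕ) : ℝ → ℝ := fun x =>
  if hx : ∃ ki : ℕ × ℕ, ki.2 < N ki.1 ∧ x = spikePos N ki.1 ki.2 then
    spikeH lam p N hx.choose.1 else 0

variable {N : ℕ → ℕ} {lam : ℕ → ℝ} {p : ℝ} {k i k' i' : ℕ}

lemma spikePos_bounds (hi : i < N k) :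
    (1/2:ℝ)^(k+1) < spikePos N k i ∧ spikePos N k i < (1/2:ℝ)^k := by
  have hb : (0:ℝ) < (1/2:ℝ)^(k+1) := by positivity
  have hm : ((i:ℝ)+1) ≤ (N k : ℝ) := by exact_mod_cast hi
  have hden : (0:ℝ) < (N k : ℝ) + 1 := by positivity
  have hc1 : 0 < ((i:ℝ)+1)/((N k:ℝ)+1) := by positivity
  have hc2 : ((i:ℝ)+1)/((N k:ℝ)+1) < 1 := by rw [div_lt_one hden]; linarith
  have h2 : (1/2:ℝ)^k = 2 * (1/2:ℝ)^(k+1) := by rw [pow_succ]; ring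
  constructor
  · rw [spikePos]; nlinarith
  · rw [spikePos, h2]; nlinarith

lemma spikeMid_bounds (hi : i < N k) :
    (1/2:ℝ)^(k+1) < spikeMid N k i ∧ spikeMid N k i < (1/2:ℝ)^k := by
  have hb : (0:ℝ) < (1/2:ℝ)^(k+1) := by positivity
  have hm : ((i:ℝ)+1) ≤ (N k : ℝ) := by exact_mod_cast hi
  have hden : (0:ℝ) < (N k : ℝ) + 1 := by positivity
  have hc1 : 0 < ((i:ℝ)+1/2)/((N k:ℝ)+1) := by positivity
  have hc2 : ((i:ℝ)+1/2)/((N k:ℝ)+1) < 1 := by rw [div_lt_one hden]; linarith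
  have h2 : (1/2:ℝ)^k = 2 * (1/2:ℝ)^(k+1) := by rw [pow_succ]; ring
  constructor
  · rw [spikeMid]; nlinarith
  · rw [spikeMid, h2]; nlinarith

lemma spikeMid_lt_pos (hi : i < N k) : spikeMid N k i < spikePos N k i := by
  have hb : (0:ℝ) < (1/2:ℝ)^(k+1) := by positivity
  have hden : (0:ℝ) < (N k : ℝ) + 1 := by positivity
  rw [spikeMid, spikePos]
  have : ((i:ℝ)+1/2)/((N k:ℝ)+1) < ((i:ℝ)+1)/((N k:ℝ)+1) :=
    (div_lt_div_iff_of_pos_right hden).2 (by linarith)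
  nlinarith

lemma spikePos_lt_mid (hi' : i < i') : spikePos N k i < spikeMid N k i' := by
  have hb : (0:ℝ) < (1/2:ℝ)^(k+1) := by positivity
  have hden : (0:ℝ) < (N k : ℝ) + 1 := by positivity
  have hii : ((i:ℝ)+1) ≤ (i':ℝ) := by exact_mod_cast hi'
  rw [spikeMid, spikePos]
  have : ((i:ℝ)+1)/((N k:ℝ)+1) < ((i':ℝ)+1/2)/((N k:ℝ)+1) :=
    (div_lt_div_iff_of_pos_right hden).2 (by linarith)
  nlinarith

lemma band_lt (hk : k < k') (hi : i < N k) (hi' : i' < N k') :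
    spikePos N k' i' < spikePos N k i := by
  have h1 := (spikePos_bounds hi).1
  have h2 := (spikePos_bounds hi').2
  have h3 : (1/2:ℝ)^(k') ≤ (1/2:ℝ)^(k+1) :=
    pow_le_pow_of_le_one (by norm_num) (by norm_num) hk
  linarith

lemma spikePos_k_inj (hi : i < N k) (hi' : i' < N k')
    (h : spikePos N k i = spikePos N k' i') : k = k' := by
  rcases lt_trichotomy k k' with hlt | rfl | hgt
  · exact absurd h (ne_of_gt (band_lt hlt hi hi'))
  · rfl
  · exact absurd h (ne_of_lt (band_lt hgt hi' hi))

lemma spikeMid_ne_pos (hi : i < N k) (hi' : i' < N k') :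
    spikeMid N k i ≠ spikePos N k' i' := by
  intro h
  rcases lt_trichotomy k k' with hlt | rfl | hgt
  · have h1 := (spikeMid_bounds hi).1
    have h2 := (spikePos_bounds hi').2
    have h3 : (1/2:ℝ)^(k') ≤ (1/2:ℝ)^(k+1) :=
      pow_le_pow_of_le_one (by norm_num) (by norm_num) hlt
    linarith
  · have hb : (0:ℝ) < (1/2:ℝ)^(k+1) := by positivity
    have hden : ((N k : ℝ) + 1) ≠ 0 := by positivity
    rw [spikeMid, spikePos] at h
    have hbne : ((1:ℝ)/2)^(k+1) ≠ 0 := by positivity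
    have hcc := mul_left_cancel₀ hbne h
    have h3 : ((i:ℝ)+1/2)/((N k:ℝ)+1) = ((i':ℝ)+1)/((N k:ℝ)+1) := by linarith
    have h2 : ((i:ℝ)+1/2) = ((i':ℝ)+1) := by
      have hdne : ((N k:ℝ)+1) ≠ 0 := by positivity
      field_simp at h3
      have h4 : ((i:ℝ) * 2 + 1) * ((N k:ℝ) + 1) = (((i':ℝ) + 1) * 2) * ((N k:ℝ) + 1) := by
        linear_combination ((N k:ℝ) + 1) * h3
      have h5 : (i:ℝ) * 2 + 1 = ((i':ℝ) + 1) * 2 := mul_right_cancel₀ hdne h4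
      linarith
    have : (2*i+1 : ℕ) = (2*i'+2 : ℕ) := by
      have : (2*(i:ℝ)+1) = (2*(i':ℝ)+2) := by linarith
      exact_mod_cast this
    omega
  · have h1 := (spikeMid_bounds hi).2
    have h2 := (spikePos_bounds hi').1
    have h3 : (1/2:ℝ)^(k) ≤ (1/2:ℝ)^(k'+1) :=
      pow_le_pow_of_le_one (by norm_num) (by norm_num) hgt
    linarith

lemma spikeH_nonneg (hlam : ∀ n, 0 < lam n) : 0 ≤ spikeH lam p N k := by
  rw [spikeH]
  exact div_nonneg (by positivity)
    (Real.rpow_nonneg (Finset.sum_nonneg fun i _ => (one_div_pos.2 (hlam i)).le) _)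

lemma spikeF_nonneg (x : ℝ) (h : ∀ n, 0 < lam n) : 0 ≤ spikeF lam p N x := by
  rw [spikeF]
  split
  · exact spikeH_nonneg h
  · exact le_rfl

lemma spikeF_pos_eq (hi : i < N k) :
    spikeF lam p N (spikePos N k i) = spikeH lam p N k := by
  have hx : ∃ ki : ℕ × ℕ, ki.2 < N ki.1 ∧ spikePos N k i = spikePos N ki.1 ki.2 :=
    ⟨(k, i), hi, rfl⟩
  rw [spikeF, dif_pos hx]
  have hs := hx.choose_spec
  have := spikePos_k_inj hi hs.1 hs.2
  exact (congrArg (spikeH lam p N) this).symm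

lemma spikeF_eq_zero {x : ℝ} (h : ∀ k i, i < N k → x ≠ spikePos N k i) :
    spikeF lam p N x = 0 := by
  rw [spikeF, dif_neg]
  rintro ⟨⟨k, i⟩, hi, hx⟩
  exact h k i hi hx

lemma spikeF_spec {x : ℝ} (h : spikeF lam p N x ≠ 0) :
    ∃ k i, i < N k ∧ x = spikePos N k i ∧ spikeF lam p N x = spikeH lam p N k := by
  by_cases hx : ∃ ki : ℕ × ℕ, ki.2 < N ki.1 ∧ x = spikePos N ki.1 ki.2
  · obtain ⟨⟨k, i⟩, hi, hxeq⟩ := hx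
    exact ⟨k, i, hi, hxeq, by rw [hxeq]; exact spikeF_pos_eq hi⟩
  · exact absurd (by rw [spikeF, dif_neg hx]) h


lemma spikeF_var_le (lam : ℕ → ℝ) (hlam : ∀ j, 0 < lam j) (hlammono : Monotone lam)
    (p : ℝ) (hp : 1 ≤ p) (N : ℕ → ℕ) (hN : ∀ k, 1 ≤ N k)
    (s : ℕ) (u v : Fin s → ℝ)
    (huv : ∀ j, u j < v j)
    (hdisj : ∀ i j, i ≠ j → Set.Ioo (u i) (v i) ∩ Set.Ioo (u j) (v j) = ∅) :
    ∑ j, |spikeF lam p N (v j) - spikeF lam p N (u j)| ^ p / lam (j : ℕ) ≤ 4 := by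
  classical
  have hp0 : (0:ℝ) < p := lt_of_lt_of_le one_pos hp
  set F := spikeF lam p N with hF
  set d : Fin s → ℝ := fun j => |F (v j) - F (u j)| with hd
  set e : Fin s → ℝ := fun j => if F (u j) ≤ F (v j) then v j else u j with he
  have hde : ∀ j, d j ≤ F (e j) := by
    intro j
    rw [hd, he]; dsimp only
    have h1 := spikeF_nonneg (lam := lam) (p := p) (N := N) (u j) hlam
    have h2 := spikeF_nonneg (lam := lam) (p := p) (N := N) (v j) hlam
    split_ifs with hcase
    · rw [abs_of_nonneg (by rw [hF] at *; linarith)]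
      rw [hF] at *; linarith
    · push_neg at hcase
      rw [abs_of_neg (by rw [hF] at *; linarith)]
      rw [hF] at *; linarith
  have hspec : ∀ j : Fin s, ∃ k ii : ℕ, d j ≠ 0 →
      ii < N k ∧ e j = spikePos N k ii ∧ F (e j) = spikeH lam p N k := by
    intro j
    by_cases hdj : d j = 0
    · exact ⟨0, 0, fun h => (h hdj).elim⟩
    · have h2 : 0 < d j := lt_of_le_of_ne (abs_nonneg _) (Ne.symm hdj)
      have hFe : F (e j) ≠ 0 := by
        have h1 := hde j
        intro h0; rw [h0] at h1; linarith
      obtain ⟨k, ii, hik, hxe, hFa⟩ := spikeF_spec hFe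
      exact ⟨k, ii, fun _ => ⟨hik, hxe, hFa⟩⟩
  choose kf iif hKspec using hspec
  set T : Finset (Fin s) := univ.filter (fun j => d j ≠ 0) with hT
  have hsum0 : ∑ j, d j ^ p / lam (j:ℕ) = ∑ j ∈ T, d j ^ p / lam (j:ℕ) := by
    rw [hT]
    refine (Finset.sum_filter_of_ne ?_).symm
    intro x _ hx h0
    apply hx
    rw [h0, Real.zero_rpow (ne_of_gt hp0), zero_div]
  have hfib := Finset.sum_fiberwise_of_maps_to (t := T.image kf)
    (fun j hj => Finset.mem_image_of_mem kf hj) (fun j => d j ^ p / lam (j:ℕ))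
  have hLpos : ∀ k, 0 < ∑ i ∈ range (N k), 1 / lam i := fun k =>
    Finset.sum_pos (fun i _ => one_div_pos.2 (hlam i)) ⟨0, mem_range.2 (hN k)⟩
  have hfiber : ∀ k ∈ T.image kf,
      ∑ j ∈ T.filter (fun j => kf j = k), d j ^ p / lam (j:ℕ) ≤ 2 * (1/2:ℝ)^k := by
    intro k hk
    set A := T.filter (fun j => kf j = k) with hA
    have hjA : ∀ j ∈ A, d j ≠ 0 ∧ kf j = k := by
      intro j hj
      rw [hA, Finset.mem_filter] at hj
      exact ⟨(Finset.mem_filter.1 hj.1).2, hj.2⟩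
    -- each term ≤ H k
    have hdH : ∀ j ∈ A, d j ≤ spikeH lam p N k := by
      intro j hj
      obtain ⟨hdj, hkj⟩ := hjA j hj
      have := (hKspec j hdj).2.2
      rw [hkj] at this
      rw [← this]; exact hde j
    -- card bound
    have hcard : A.card ≤ 2 * N k := by
      have h2 : A.card ≤ ((range (N k)) ×ˢ ({true, false} : Finset Bool)).card := by
        refine Finset.card_le_card_of_injOn
          (fun j => (iif j, if F (u j) ≤ F (v j) then true else false)) ?_ ?_
        · intro j hj
          obtain ⟨hdj, hkj⟩ := hjA j hj
          have h1 := (hKspec j hdj).1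
          rw [hkj] at h1
          rw [Finset.mem_coe, Finset.mem_product]
          refine ⟨mem_range.2 h1, ?_⟩
          by_cases hc : F (u j) ≤ F (v j) <;> simp [hc]
        · intro j hj j' hj' hψ
          obtain ⟨hdj, hkj⟩ := hjA j hj
          obtain ⟨hdj', hkj'⟩ := hjA j' hj'
          simp only [Prod.mk.injEq] at hψ
          obtain ⟨hii, hside⟩ := hψ
          have hee : e j = e j' := by
            rw [(hKspec j hdj).2.1, (hKspec j' hdj').2.1, hkj, hkj', hii]
          by_contra hne
          have hEmpty := hdisj j j' hne
          by_cases hc : F (u j) ≤ F (v j) <;> by_cases hc' : F (u j') ≤ F (v j')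
          · have hvv : v j = v j' := by
              rw [he] at hee; dsimp only at hee
              rwa [if_pos hc, if_pos hc'] at hee
            have hxgt : max (u j) (u j') < (max (u j) (u j') + v j)/2 := by
              have := max_lt (huv j) (hvv ▸ huv j')
              linarith
            have hxlt : (max (u j) (u j') + v j)/2 < v j := by
              have := max_lt (huv j) (hvv ▸ huv j')
              linarith
            have hmem : (max (u j) (u j') + v j)/2 ∈ Set.Ioo (u j) (v j) ∩ Set.Ioo (u j') (v j') :=
              ⟨⟨lt_of_le_of_lt (le_max_left _ _) hxgt, hxlt⟩,
               ⟨lt_of_le_of_lt (le_max_right _ _) hxgt, hvv ▸ hxlt⟩⟩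
            rw [hEmpty] at hmem
            exact hmem
          · simp [hc, hc'] at hside
          · simp [hc, hc'] at hside
          · have huu : u j = u j' := by
              rw [he] at hee; dsimp only at hee
              rwa [if_neg hc, if_neg hc'] at hee
            have hlt : u j < min (v j) (v j') := lt_min (huv j) (huu ▸ huv j')
            have hxgt : u j < (u j + min (v j) (v j'))/2 := by linarith
            have hxlt : (u j + min (v j) (v j'))/2 < min (v j) (v j') := by linarith
            have hmem : (u j + min (v j) (v j'))/2 ∈ Set.Ioo (u j) (v j) ∩ Set.Ioo (u j') (v j') :=
              ⟨⟨hxgt, lt_of_lt_of_le hxlt (min_le_left _ _)⟩,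
               ⟨huu ▸ hxgt, lt_of_lt_of_le hxlt (min_le_right _ _)⟩⟩
            rw [hEmpty] at hmem
            exact hmem
      have h3 : ((range (N k)) ×ˢ ({true, false} : Finset Bool)).card = N k * 2 := by
        rw [Finset.card_product, Finset.card_range]
        norm_num
      omega
    -- sum bound
    have hsum1 : ∑ j ∈ A, d j ^ p / lam (j:ℕ)
        ≤ spikeH lam p N k ^ p * ∑ j ∈ A, 1 / lam (j:ℕ) := by
      rw [Finset.mul_sum]
      refine Finset.sum_le_sum fun j hj => ?_
      rw [div_eq_mul_one_div (d j ^ p), mul_one_div, mul_one_div, div_le_div_iff_of_pos_right (hlam (j:ℕ))]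
      exact Real.rpow_le_rpow (abs_nonneg _) (hdH j hj) hp0.le
    have hginv : Antitone (fun m => 1 / lam m) := by
      intro m n hmn
      exact one_div_le_one_div_of_le (hlam m) (hlammono hmn)
    have hsum2 : ∑ j ∈ A, 1 / lam (j:ℕ) ≤ ∑ m ∈ range (2 * N k), 1 / lam m := by
      have himg : ∑ j ∈ A, 1 / lam (j:ℕ) = ∑ m ∈ A.image Fin.val, 1 / lam m :=
        (Finset.sum_image (f := fun m => 1 / lam m) (g := Fin.val) (fun x _ y _ h => Fin.val_injective h)).symm
      rw [himg]
      calc ∑ m ∈ A.image Fin.val, 1 / lam m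
          ≤ ∑ m ∈ range (A.image Fin.val).card, 1 / lam m :=
            antitone_finset_sum_le _ hginv (fun n => (one_div_pos.2 (hlam n)).le) _
        _ ≤ ∑ m ∈ range (2 * N k), 1 / lam m := by
            refine Finset.sum_le_sum_of_subset_of_nonneg (Finset.range_subset_range.2 ?_)
              (fun n _ _ => (one_div_pos.2 (hlam n)).le)
            rw [Finset.card_image_of_injective _ Fin.val_injective]
            exact hcard
    have hsum3 : ∑ m ∈ range (2 * N k), 1 / lam m ≤ 2 * ∑ m ∈ range (N k), 1 / lam m :=
      sum_range_two_mul_le _ hginv (N k)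
    have hHp : spikeH lam p N k ^ p = ((1/2:ℝ)^k) ^ p / (∑ i ∈ range (N k), 1 / lam i) := by
      rw [spikeH, Real.div_rpow (by positivity) (Real.rpow_nonneg (hLpos k).le _),
        ← Real.rpow_mul (hLpos k).le, one_div_mul_cancel (ne_of_gt hp0), Real.rpow_one]
    have hcp : ((1/2:ℝ)^k) ^ p ≤ (1/2:ℝ)^k := by
      have h1 : ((1/2:ℝ)^k) ^ p ≤ ((1/2:ℝ)^k) ^ (1:ℝ) :=
        Real.rpow_le_rpow_of_exponent_ge (by positivity) (pow_le_one₀ (by norm_num) (by norm_num)) hp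
      rwa [Real.rpow_one] at h1
    calc ∑ j ∈ A, d j ^ p / lam (j:ℕ)
        ≤ spikeH lam p N k ^ p * ∑ j ∈ A, 1 / lam (j:ℕ) := hsum1
      _ ≤ spikeH lam p N k ^ p * (2 * ∑ m ∈ range (N k), 1 / lam m) := by
          refine mul_le_mul_of_nonneg_left (le_trans hsum2 hsum3) ?_
          exact Real.rpow_nonneg (spikeH_nonneg hlam) p
      _ = 2 * (((1/2:ℝ)^k) ^ p) := by
          have hLne : (∑ i ∈ range (N k), 1 / lam i) ≠ 0 := ne_of_gt (hLpos k)
          rw [hHp]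
          field_simp
      _ ≤ 2 * (1/2:ℝ)^k := by linarith [hcp]
  calc ∑ j, d j ^ p / lam (j:ℕ) = ∑ j ∈ T, d j ^ p / lam (j:ℕ) := hsum0
    _ = ∑ k ∈ T.image kf, ∑ j ∈ T.filter (fun j => kf j = k), d j ^ p / lam (j:ℕ) := hfib.symm
    _ ≤ ∑ k ∈ T.image kf, 2 * (1/2:ℝ)^k := Finset.sum_le_sum hfiber
    _ = 2 * ∑ k ∈ T.image kf, (1/2:ℝ)^k := by rw [Finset.mul_sum]
    _ ≤ 2 * 2 := by
        have := geom_finset_le (T.image kf)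
        linarith
    _ = 4 := by norm_num


section key
variable (lam gam : ℕ → ℝ) (p q Mq : ℝ)

lemma claimA (hlam : ∀ j, 0 < lam j) (hp : 1 ≤ p) (hpq : p ≤ q)
    (a : ℕ → ℝ) (ha0 : ∀ j, 0 ≤ a j) (hamono : Antitone a) (n : ℕ) :
    ∑ j ∈ range n, a j ^ q * ((∑ i ∈ range (j+1), 1 / lam i) ^ (q/p) - (∑ i ∈ range j, 1 / lam i) ^ (q/p))
      ≤ (∑ j ∈ range n, a j ^ p / lam j) ^ (q/p) := by
  have hp0 : (0:ℝ) < p := lt_of_lt_of_le one_pos hp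
  have hq0' : (0:ℝ) < q := lt_of_lt_of_le hp0 hpq
  have hr0 : (0:ℝ) < q / p := div_pos hq0' hp0
  have hr1 : 1 ≤ q / p := (one_le_div hp0).2 hpq
  set L : ℕ → ℝ := fun m => ∑ i ∈ range m, 1 / lam i with hL
  have hL0 : ∀ m, 0 ≤ L m := fun m => Finset.sum_nonneg fun i _ => (one_div_pos.2 (hlam i)).le
  induction n with
  | zero => simp [Real.zero_rpow (ne_of_gt hr0)]
  | succ n ih =>
    rw [sum_range_succ, sum_range_succ (f := fun j => a j ^ p / lam j)]
    set S : ℝ := ∑ j ∈ range n, a j ^ p / lam j with hS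
    have hS0 : 0 ≤ S := Finset.sum_nonneg fun i _ => div_nonneg (Real.rpow_nonneg (ha0 i) p) (hlam i).le
    have hSL : a n ^ p * L n ≤ S := by
      rw [hL, Finset.mul_sum, hS]
      refine Finset.sum_le_sum fun i hi => ?_
      rw [mul_one_div, div_le_div_iff_of_pos_right (hlam i)]
      exact Real.rpow_le_rpow (ha0 n) (hamono (le_of_lt (mem_range.1 hi))) (le_of_lt hp0)
    have haq : a n ^ q = (a n ^ p) ^ (q/p) := by
      rw [← Real.rpow_mul (ha0 n)]
      congr 1
      field_simp
    have hshift := rpow_shift_mono hr1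
      (mul_nonneg (Real.rpow_nonneg (ha0 n) p) (hL0 n)) hSL
      (mul_nonneg (Real.rpow_nonneg (ha0 n) p) (one_div_pos.2 (hlam n)).le)
    have hLs : L (n+1) = L n + 1 / lam n := by rw [hL]; exact sum_range_succ _ n
    have hda : a n ^ p * L n + a n ^ p * (1 / lam n) = a n ^ p * L (n+1) := by
      rw [hLs]; ring
    have hdb : S + a n ^ p * (1 / lam n) = S + a n ^ p / lam n := by
      rw [mul_one_div]
    rw [hda, hdb] at hshift
    have hmulr : ∀ m, (a n ^ p * L m) ^ (q/p) = (a n ^ p) ^ (q/p) * (L m) ^ (q/p) :=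
      fun m => Real.mul_rpow (Real.rpow_nonneg (ha0 n) p) (hL0 m)
    rw [hmulr, hmulr] at hshift
    have : a n ^ q * (L (n+1) ^ (q/p) - L n ^ (q/p))
        ≤ (S + a n ^ p / lam n) ^ (q/p) - S ^ (q/p) := by
      rw [haq]; nlinarith [hshift]
    linarith [ih, this]

lemma claimB (hgam : ∀ j, 0 < gam j) (hp : 1 ≤ p) (hpq : p ≤ q) (hMq : 0 ≤ Mq)
    (hM : ∀ m, 1 ≤ m → (∑ i ∈ range m, 1 / gam i) ≤ Mq * (∑ i ∈ range m, 1 / lam i) ^ (q/p))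
    (a : ℕ → ℝ) (ha0 : ∀ j, 0 ≤ a j) (hamono : Antitone a) (n : ℕ) :
    ∑ j ∈ range n, a j ^ q / gam j
      ≤ Mq * ∑ j ∈ range n, a j ^ q * ((∑ i ∈ range (j+1), 1 / lam i) ^ (q/p) - (∑ i ∈ range j, 1 / lam i) ^ (q/p)) := by
  have hq0 : (0:ℝ) ≤ q := le_trans (le_trans zero_le_one hp) hpq
  set c : ℕ → ℝ := fun j => a j ^ q with hc
  have hc0 : ∀ j, 0 ≤ c j := fun j => Real.rpow_nonneg (ha0 j) q
  have hcmono : Antitone c := fun i j hij => Real.rpow_le_rpow (ha0 j) (hamono hij) hq0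
  set G : ℕ → ℝ := fun m => ∑ i ∈ range m, 1 / gam i with hG
  set Lr : ℕ → ℝ := fun m => (∑ i ∈ range m, 1 / lam i) ^ (q/p) with hLr
  have hGd : ∀ j, 1 / gam j = G (j+1) - G j := by
    intro j; rw [hG]; simp [sum_range_succ]
  have hG0 : G 0 = 0 := by simp [hG]
  have hp0 : (0:ℝ) < p := lt_of_lt_of_le one_pos hp
  have hLr0 : Lr 0 = 0 := by
    have : q / p ≠ 0 := ne_of_gt (div_pos (lt_of_lt_of_le hp0 hpq) hp0)
    simp [hLr, Real.zero_rpow this]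
  have lhs_eq : ∑ j ∈ range n, a j ^ q / gam j = ∑ j ∈ range n, c j * (G (j+1) - G j) := by
    refine Finset.sum_congr rfl fun j _ => ?_
    rw [← hGd j, div_eq_mul_one_div]
  rw [lhs_eq, abel_id c G n, hG0]
  have rhs_eq : ∑ j ∈ range n, a j ^ q * ((∑ i ∈ range (j+1), 1 / lam i) ^ (q/p) - (∑ i ∈ range j, 1 / lam i) ^ (q/p))
      = ∑ j ∈ range n, (c j - c (j+1)) * Lr (j+1) + c n * Lr n - c 0 * Lr 0 :=
    abel_id c Lr n
  rw [rhs_eq, hLr0]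
  rcases Nat.eq_zero_or_pos n with rfl | hn
  · simp [hG0, hLr0]
  have hterm : ∀ j ∈ range n, (c j - c (j+1)) * G (j+1) ≤ Mq * ((c j - c (j+1)) * Lr (j+1)) := by
    intro j _
    have h1 : G (j+1) ≤ Mq * Lr (j+1) := hM (j+1) (Nat.succ_le_succ (Nat.zero_le j))
    have h2 : 0 ≤ c j - c (j+1) := sub_nonneg.2 (hcmono (Nat.le_succ j))
    calc (c j - c (j+1)) * G (j+1) ≤ (c j - c (j+1)) * (Mq * Lr (j+1)) := by
          exact mul_le_mul_of_nonneg_left h1 h2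
      _ = Mq * ((c j - c (j+1)) * Lr (j+1)) := by ring
  have hlast : c n * G n ≤ Mq * (c n * Lr n) := by
    have h1 : G n ≤ Mq * Lr n := hM n hn
    calc c n * G n ≤ c n * (Mq * Lr n) := mul_le_mul_of_nonneg_left h1 (hc0 n)
      _ = Mq * (c n * Lr n) := by ring
  have h1 := Finset.sum_le_sum hterm
  rw [← Finset.mul_sum] at h1
  have expand : Mq * (∑ j ∈ range n, (c j - c (j+1)) * Lr (j+1) + c n * Lr n - c 0 * 0)
      = Mq * ∑ j ∈ range n, (c j - c (j+1)) * Lr (j+1) + Mq * (c n * Lr n) := by ring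
  rw [expand]
  linarith [h1, hlast]
end key


lemma sufficiency (lam gam : ℕ → ℝ)
    (hlam : ∀ j, 0 < lam j) (hgam : ∀ j, 0 < gam j)
    (hlammono : Monotone lam) (hgammono : Monotone gam)
    (p q : ℝ) (hp : 1 ≤ p) (hpq : p ≤ q)
    (M : ℝ) (hM : ∀ n : ℕ, 1 ≤ n →
      (∑ j ∈ range n, 1 / gam j) ^ (1 / q) / (∑ j ∈ range n, 1 / lam j) ^ (1 / p) ≤ M)
    (f : ℝ → ℝ)
    (hf : ∃ V : ℝ, ∀ (s : ℕ) (u v : Fin s → ℝ),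
        (∀ j, 0 ≤ u j ∧ u j < v j ∧ v j ≤ 1) →
        (∀ i j, i ≠ j → Set.Ioo (u i) (v i) ∩ Set.Ioo (u j) (v j) = ∅) →
        ∑ j, |f (v j) - f (u j)| ^ p / lam (j : ℕ) ≤ V) :
    (∃ W : ℝ, ∀ (s : ℕ) (u v : Fin s → ℝ),
        (∀ j, 0 ≤ u j ∧ u j < v j ∧ v j ≤ 1) →
        (∀ i j, i ≠ j → Set.Ioo (u i) (v i) ∩ Set.Ioo (u j) (v j) = ∅) →
        ∑ j, |f (v j) - f (u j)| ^ q / gam (j : ℕ) ≤ W) := by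
  obtain ⟨V, hV⟩ := hf
  have hp0 : (0:ℝ) < p := lt_of_lt_of_le one_pos hp
  have hq0 : (0:ℝ) < q := lt_of_lt_of_le hp0 hpq
  have hV0 : 0 ≤ V := by
    simpa using hV 0 Fin.elim0 Fin.elim0 (fun j => j.elim0) (fun i j _ => i.elim0)
  have hLpos : ∀ m, 1 ≤ m → 0 < ∑ i ∈ range m, 1 / lam i := fun m hm =>
    Finset.sum_pos (fun i _ => one_div_pos.2 (hlam i)) ⟨0, mem_range.2 (by omega)⟩
  have hGpos : ∀ m, 1 ≤ m → 0 < ∑ i ∈ range m, 1 / gam i := fun m hm =>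
    Finset.sum_pos (fun i _ => one_div_pos.2 (hgam i)) ⟨0, mem_range.2 (by omega)⟩
  have hMpos : 0 < M := by
    have h1 := hM 1 le_rfl
    have : 0 < (∑ j ∈ range 1, 1 / gam j) ^ (1/q) / (∑ j ∈ range 1, 1 / lam j) ^ (1/p) :=
      div_pos (Real.rpow_pos_of_pos (hGpos 1 le_rfl) _) (Real.rpow_pos_of_pos (hLpos 1 le_rfl) _)
    linarith
  have hMq : ∀ m, 1 ≤ m → (∑ i ∈ range m, 1 / gam i)
      ≤ M ^ q * (∑ i ∈ range m, 1 / lam i) ^ (q/p) := by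
    intro m hm
    set G := ∑ i ∈ range m, 1 / gam i
    set L := ∑ i ∈ range m, 1 / lam i
    have hG := hGpos m hm
    have hL := hLpos m hm
    have h1 : G ^ (1/q) ≤ M * L ^ (1/p) := by
      have := hM m hm
      rwa [div_le_iff₀ (Real.rpow_pos_of_pos hL _)] at this
    have h2 : (G ^ (1/q)) ^ q ≤ (M * L ^ (1/p)) ^ q :=
      Real.rpow_le_rpow (Real.rpow_nonneg hG.le _) h1 hq0.le
    rwa [← Real.rpow_mul hG.le, one_div, inv_mul_cancel₀ (ne_of_gt hq0), Real.rpow_one,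
      Real.mul_rpow hMpos.le (Real.rpow_nonneg hL.le _), ← Real.rpow_mul hL.le,
      show 1/p*q = q/p by ring] at h2
  refine ⟨M ^ q * V ^ (q/p), ?_⟩
  intro s u v hval hdisj
  set d : Fin s → ℝ := fun j => |f (v j) - f (u j)| with hd
  set τ := Tuple.sort (fun j => -d j) with hτ
  set a : Fin s → ℝ := fun j => d (τ j) with ha
  have hasort : Monotone ((fun j => -d j) ∘ τ) := Tuple.monotone_sort _
  have haanti : ∀ i j : Fin s, i ≤ j → a j ≤ a i := by
    intro i j hij
    have := hasort hij
    simp only [Function.comp] at this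
    simpa [ha] using this
  set a' : ℕ → ℝ := fun n => if h : n < s then a ⟨n, h⟩ else 0 with ha'
  have ha'0 : ∀ n, 0 ≤ a' n := by
    intro n; rw [ha']; dsimp only
    split
    · exact abs_nonneg _
    · exact le_rfl
  have ha'anti : Antitone a' := by
    intro m n hmn
    rw [ha']; dsimp only
    split <;> split
    · exact haanti ⟨m, by omega⟩ ⟨n, by omega⟩ hmn
    · omega
    · exact abs_nonneg _
    · exact le_rfl
  have hfin : ∀ (j : Fin s), a' (j : ℕ) = a j := by
    intro j; rw [ha']; dsimp only; rw [dif_pos j.isLt]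
  -- apply hypothesis to permuted system
  have hVs : ∑ j ∈ range s, a' j ^ p / lam j ≤ V := by
    have := hV s (fun j => u (τ j)) (fun j => v (τ j)) (fun j => hval (τ j))
      (fun i j hij => hdisj (τ i) (τ j) (fun h => hij (τ.injective h)))
    calc ∑ j ∈ range s, a' j ^ p / lam j
        = ∑ j : Fin s, a' (j:ℕ) ^ p / lam (j:ℕ) := (Fin.sum_univ_eq_sum_range _ s).symm
      _ = ∑ j : Fin s, |f (v (τ j)) - f (u (τ j))| ^ p / lam (j:ℕ) := by
          refine Finset.sum_congr rfl fun j _ => ?_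
          rw [hfin j]
      _ ≤ V := this
  -- rearrangement
  have hmono : Monovary (fun j : Fin s => a j ^ q) (fun j : Fin s => (gam (j:ℕ))⁻¹) := by
    intro i j hg
    simp only at hg
    have hlt : gam (j:ℕ) < gam (i:ℕ) := (inv_lt_inv₀ (hgam (i:ℕ)) (hgam (j:ℕ))).1 hg
    have hji : (j:ℕ) ≤ (i:ℕ) := by
      by_contra hc
      push_neg at hc
      exact absurd (hgammono hc.le) (not_le.2 hlt)
    exact Real.rpow_le_rpow (abs_nonneg _) (haanti j i (by exact_mod_cast hji)) hq0.le
  have hrearr : ∑ j : Fin s, d j ^ q / gam (j:ℕ) ≤ ∑ j : Fin s, a j ^ q / gam (j:ℕ) := by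
    have h1 : ∑ j : Fin s, d j ^ q / gam (j:ℕ) = ∑ j : Fin s, a j ^ q * (gam ((τ j):ℕ))⁻¹ := by
      rw [← Equiv.sum_comp τ (fun j => d j ^ q / gam (j:ℕ))]
      refine Finset.sum_congr rfl fun j _ => ?_
      rw [div_eq_mul_inv, ha]
    have h2 := hmono.sum_smul_comp_perm_le_sum_smul (σ := τ)
    simp only [smul_eq_mul] at h2
    rw [h1]
    calc ∑ j : Fin s, a j ^ q * (gam ((τ j):ℕ))⁻¹ ≤ ∑ j : Fin s, a j ^ q * (gam (j:ℕ))⁻¹ := h2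
      _ = ∑ j : Fin s, a j ^ q / gam (j:ℕ) := by
          refine Finset.sum_congr rfl fun j _ => ?_
          rw [div_eq_mul_inv]
  calc ∑ j : Fin s, d j ^ q / gam (j:ℕ) ≤ ∑ j : Fin s, a j ^ q / gam (j:ℕ) := hrearr
    _ = ∑ j ∈ range s, a' j ^ q / gam j := by
        rw [← Fin.sum_univ_eq_sum_range (fun j => a' j ^ q / gam j) s]
        exact Finset.sum_congr rfl fun j _ => by rw [hfin j]
    _ ≤ M ^ q * ∑ j ∈ range s, a' j ^ q * ((∑ i ∈ range (j+1), 1 / lam i) ^ (q/p) - (∑ i ∈ range j, 1 / lam i) ^ (q/p)) :=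
        claimB lam gam p q (M ^ q) hgam hp hpq (Real.rpow_nonneg hMpos.le q) hMq a' ha'0 ha'anti s
    _ ≤ M ^ q * (∑ j ∈ range s, a' j ^ p / lam j) ^ (q/p) := by
        have := claimA lam p q hlam hp hpq a' ha'0 ha'anti s
        exact mul_le_mul_of_nonneg_left this (Real.rpow_nonneg hMpos.le q)
    _ ≤ M ^ q * V ^ (q/p) := by
        have hS0 : 0 ≤ ∑ j ∈ range s, a' j ^ p / lam j :=
          Finset.sum_nonneg fun i _ => div_nonneg (Real.rpow_nonneg (ha'0 i) p) (hlam i).le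
        exact mul_le_mul_of_nonneg_left
          (Real.rpow_le_rpow hS0 hVs (by positivity)) (Real.rpow_nonneg hMpos.le q)


lemma necessity (lam gam : ℕ → ℝ)
    (hlam : ∀ j, 0 < lam j) (hgam : ∀ j, 0 < gam j)
    (hlammono : Monotone lam) (hgammono : Monotone gam)
    (p q : ℝ) (hp : 1 ≤ p) (hpq : p ≤ q)
    (hembed : ∀ f : ℝ → ℝ,
      (∃ V : ℝ, ∀ (s : ℕ) (u v : Fin s → ℝ),
        (∀ j, 0 ≤ u j ∧ u j < v j ∧ v j ≤ 1) →
        (∀ i j, i ≠ j → Set.Ioo (u i) (v i) ∩ Set.Ioo (u j) (v j) = ∅) →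
        ∑ j, |f (v j) - f (u j)| ^ p / lam (j : ℕ) ≤ V) →
      (∃ W : ℝ, ∀ (s : ℕ) (u v : Fin s → ℝ),
        (∀ j, 0 ≤ u j ∧ u j < v j ∧ v j ≤ 1) →
        (∀ i j, i ≠ j → Set.Ioo (u i) (v i) ∩ Set.Ioo (u j) (v j) = ∅) →
        ∑ j, |f (v j) - f (u j)| ^ q / gam (j : ℕ) ≤ W)) :
    (∃ M : ℝ, ∀ n : ℕ, 1 ≤ n →
      (∑ j ∈ range n, 1 / gam j) ^ (1 / q) / (∑ j ∈ range n, 1 / lam j) ^ (1 / p) ≤ M) := by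
  have hp0 : (0:ℝ) < p := lt_of_lt_of_le one_pos hp
  have hq0 : (0:ℝ) < q := lt_of_lt_of_le hp0 hpq
  by_contra hnot
  push_neg at hnot
  have hch : ∀ k : ℕ, ∃ n, 1 ≤ n ∧ (2:ℝ)^k * ((k:ℝ)+1) <
      (∑ j ∈ range n, 1 / gam j) ^ (1 / q) / (∑ j ∈ range n, 1 / lam j) ^ (1 / p) :=
    fun k => hnot _
  choose N hN1 hNr using hch
  obtain ⟨W, hW⟩ := hembed (spikeF lam p N)
    ⟨4, fun s u v hval hdisj =>
      spikeF_var_le lam hlam hlammono p hp N hN1 s u v (fun j => (hval j).2.1) hdisj⟩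
  obtain ⟨k, hk⟩ := exists_nat_gt W
  set L := ∑ j ∈ range (N k), 1 / lam j with hL
  set G := ∑ j ∈ range (N k), 1 / gam j with hG
  have hLpos : 0 < L := Finset.sum_pos (fun i _ => one_div_pos.2 (hlam i)) ⟨0, mem_range.2 (hN1 k)⟩
  have hGpos : 0 < G := Finset.sum_pos (fun i _ => one_div_pos.2 (hgam i)) ⟨0, mem_range.2 (hN1 k)⟩
  -- the test system
  have hval : ∀ i : Fin (N k), 0 ≤ spikeMid N k (i:ℕ) ∧ spikeMid N k (i:ℕ) < spikePos N k (i:ℕ)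
      ∧ spikePos N k (i:ℕ) ≤ 1 := by
    intro i
    have h1 := (spikeMid_bounds (N := N) i.isLt).1
    have h2 := (spikePos_bounds (N := N) i.isLt).2
    have h3 : (0:ℝ) < (1/2:ℝ)^(k+1) := by positivity
    have h4 : ((1:ℝ)/2)^k ≤ 1 := pow_le_one₀ (by norm_num) (by norm_num)
    exact ⟨by linarith, spikeMid_lt_pos i.isLt, by linarith⟩
  have hdisaux : ∀ i j : Fin (N k), (i:ℕ) < (j:ℕ) →
      Set.Ioo (spikeMid N k (i:ℕ)) (spikePos N k (i:ℕ)) ∩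
        Set.Ioo (spikeMid N k (j:ℕ)) (spikePos N k (j:ℕ)) = ∅ := by
    intro i j hij
    have hsep : spikePos N k (i:ℕ) < spikeMid N k (j:ℕ) := spikePos_lt_mid hij
    rw [Set.eq_empty_iff_forall_notMem]
    rintro x ⟨⟨_, hx2⟩, ⟨hx3, _⟩⟩
    linarith
  have hdis : ∀ i j : Fin (N k), i ≠ j →
      Set.Ioo (spikeMid N k (i:ℕ)) (spikePos N k (i:ℕ)) ∩
        Set.Ioo (spikeMid N k (j:ℕ)) (spikePos N k (j:ℕ)) = ∅ := by
    intro i j hij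
    rcases lt_trichotomy (i:ℕ) (j:ℕ) with h | h | h
    · exact hdisaux i j h
    · exact absurd (Fin.ext h) hij
    · rw [Set.inter_comm]; exact hdisaux j i h
  have hsum := hW (N k) (fun i => spikeMid N k (i:ℕ)) (fun i => spikePos N k (i:ℕ)) hval hdis
  -- compute the sum
  have hsumval : ∑ i : Fin (N k),
      |spikeF lam p N (spikePos N k (i:ℕ)) - spikeF lam p N (spikeMid N k (i:ℕ))| ^ q / gam (i:ℕ)
      = spikeH lam p N k ^ q * G := by
    have hterm : ∀ i : Fin (N k),
        |spikeF lam p N (spikePos N k (i:ℕ)) - spikeF lam p N (spikeMid N k (i:ℕ))| ^ q / gam (i:ℕ)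
        = spikeH lam p N k ^ q * (1 / gam (i:ℕ)) := by
      intro i
      rw [spikeF_pos_eq i.isLt,
        spikeF_eq_zero (fun k' i' hi' => spikeMid_ne_pos i.isLt hi'),
        sub_zero, abs_of_nonneg (spikeH_nonneg hlam), div_eq_mul_one_div]
    calc ∑ i : Fin (N k), |spikeF lam p N (spikePos N k (i:ℕ)) - spikeF lam p N (spikeMid N k (i:ℕ))| ^ q / gam (i:ℕ)
        = ∑ i : Fin (N k), spikeH lam p N k ^ q * (1 / gam (i:ℕ)) :=
          Finset.sum_congr rfl fun i _ => hterm i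
      _ = spikeH lam p N k ^ q * ∑ i : Fin (N k), (1 / gam (i:ℕ)) := by rw [← Finset.mul_sum]
      _ = spikeH lam p N k ^ q * G := by
          rw [hG, Fin.sum_univ_eq_sum_range (fun i => 1 / gam i) (N k)]
  -- lower bound
  set b := (1/2:ℝ)^k * (G ^ (1/q) / L ^ (1/p)) with hb
  have hbgt : (k:ℝ) + 1 < b := by
    have h1 : (0:ℝ) < (1/2:ℝ)^k := by positivity
    have h2 := hNr k
    rw [← hG, ← hL] at h2
    have h3 := mul_lt_mul_of_pos_left h2 h1
    have h4 : (1/2:ℝ)^k * ((2:ℝ)^k * ((k:ℝ)+1)) = (k:ℝ)+1 := by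
      rw [← mul_assoc, ← mul_pow]
      norm_num
    rw [h4] at h3
    exact h3
  have hbeq : spikeH lam p N k ^ q * G = b ^ q := by
    have h1 : b = spikeH lam p N k * G ^ (1/q) := by
      rw [hb, spikeH, ← hL]
      ring
    rw [h1, Real.mul_rpow (spikeH_nonneg hlam) (Real.rpow_nonneg hGpos.le _),
      ← Real.rpow_mul hGpos.le, one_div_mul_cancel (ne_of_gt hq0), Real.rpow_one]
  have hble : b ≤ b ^ q := by
    have hb1 : 1 ≤ b := by
      have : (0:ℝ) ≤ (k:ℝ) := Nat.cast_nonneg k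
      linarith
    calc b = b ^ (1:ℝ) := (Real.rpow_one b).symm
      _ ≤ b ^ q := Real.rpow_le_rpow_of_exponent_le hb1 (le_trans hp hpq)
  rw [hsumval, hbeq] at hsum
  have : (k:ℝ) < W := by linarith
  linarith



/-- Corollary 1.5: for `1 ≤ p ≤ q < ∞` and Waterman sequences `Λ, Γ`,
`ΛBV^(p) ⊆ ΓBV^(q)` if and only if `sup_{n≥1} Γ(n)^(1/q) / Λ(n)^(1/p) < ∞`. -/
theorem embedding_constant_exponents_iff (lam gam : ℕ → ℝ)
    (hlam : ∀ j, 0 < lam j) (hgam : ∀ j, 0 < gam j)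
    (hlammono : Monotone lam) (hgammono : Monotone gam)
    (hlamdiv : Tendsto (fun n => ∑ j ∈ range n, 1 / lam j) atTop atTop)
    (hgamdiv : Tendsto (fun n => ∑ j ∈ range n, 1 / gam j) atTop atTop)
    (p q : ℝ) (hp : 1 ≤ p) (hpq : p ≤ q) :
    (∀ f : ℝ → ℝ,
      (∃ V : ℝ, ∀ (s : ℕ) (u v : Fin s → ℝ),
        (∀ j, 0 ≤ u j ∧ u j < v j ∧ v j ≤ 1) →
        (∀ i j, i ≠ j → Set.Ioo (u i) (v i) ∩ Set.Ioo (u j) (v j) = ∅) →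
        ∑ j, |f (v j) - f (u j)| ^ p / lam (j : ℕ) ≤ V) →
      (∃ W : ℝ, ∀ (s : ℕ) (u v : Fin s → ℝ),
        (∀ j, 0 ≤ u j ∧ u j < v j ∧ v j ≤ 1) →
        (∀ i j, i ≠ j → Set.Ioo (u i) (v i) ∩ Set.Ioo (u j) (v j) = ∅) →
        ∑ j, |f (v j) - f (u j)| ^ q / gam (j : ℕ) ≤ W)) ↔
    (∃ M : ℝ, ∀ n : ℕ, 1 ≤ n →
      (∑ j ∈ range n, 1 / gam j) ^ (1 / q) / (∑ j ∈ range n, 1 / lam j) ^ (1 / p) ≤ M) := by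
  constructor
  · intro hembed
    exact necessity lam gam hlam hgam hlammono hgammono p q hp hpq hembed
  · rintro ⟨M, hM⟩ f hf
    exact sufficiency lam gam hlam hgam hlammono hgammono p q hp hpq M hM f hf
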